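/- The FDR of the Benjamini–Hochberg step-down test is not monotone in the false-null p-values: with m = 2, m_0 = m_1 = 1, I_0 = {1}, p_1 and U i.i.d. uniform on [0,1], one has FDR(p_2 = αU) = 3α/8, FDR(p_2 = U) = α/2 − α²/8, FDR(p_2 = 0) = α/2, and FDR(p_2 = (1−α)U + α) = α/2; hence FDR(p_2 = αU) < FDR(p_2 = U) < FDR(p_2 = (1−α)U+α) while FDR(p_2 = 0) > FDR(p_2 = αU), even though 0 ≤ αU ≤ U ≤ (1−α)U+α pointwise. -/

import Mathlib

open MeasureTheory ProbabilityTheory Finset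
open scoped Classical
noncomputable section

/-- `#{i : p i ≤ t}`, i.e. `m·F̂_m(t)`. -/
def countLE {m : ℕ} (p : Fin m → ℝ) (t : ℝ) : ℕ :=
  (Finset.univ.filter (fun i => p i ≤ t)).card

/-- The `i`-th order statistic `p_{i:m}` (for `1 ≤ i ≤ m`), characterized by
`p_{i:m} ≤ t ↔ i ≤ #{k : p k ≤ t}`. -/
def orderStat {m : ℕ} (p : Fin m → ℝ) (i : ℕ) : ℝ :=
  sInf {t | i ≤ countLE p t}

/-- Step-up rejection number `R = max {j : p_{j:m} ≤ α_j}` (`max ∅ = 0`). -/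
def suR {m : ℕ} (α : ℕ → ℝ) (p : Fin m → ℝ) : ℕ :=
  WithBot.unbotD 0 (((Finset.range (m+1)).filter (fun j => 1 ≤ j ∧ orderStat p j ≤ α j)).max)

/-- Step-down rejection number `R = max {j : p_{i:m} ≤ α_i for all i ≤ j}`. -/
def sdR {m : ℕ} (α : ℕ → ℝ) (p : Fin m → ℝ) : ℕ :=
  WithBot.unbotD 0 (((Finset.range (m+1)).filter
    (fun j => ∀ i ∈ Finset.Icc 1 j, orderStat p i ≤ α i)).max)

/-- FDR `= E[V / max(R,1)]` for rejection number `R` and rejection rule `rej`. -/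
def FDR {Ω : Type*} [MeasurableSpace Ω] (μ : Measure Ω) {m : ℕ}
    (p : Ω → Fin m → ℝ) (I0 : Finset (Fin m))
    (R : (Fin m → ℝ) → ℕ) (rej : (Fin m → ℝ) → Fin m → Prop) : ℝ :=
  ∫ ω, ((I0.filter (fun i => rej (p ω) i)).card : ℝ) / (max (R (p ω)) 1 : ℕ) ∂μ

/-- FDR of the step-up test with critical values `α`. -/
def suFDR {Ω : Type*} [MeasurableSpace Ω] (μ : Measure Ω) {m : ℕ}
    (α : ℕ → ℝ) (p : Ω → Fin m → ℝ) (I0 : Finset (Fin m)) : ℝ :=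
  FDR μ p I0 (suR α) (fun q i => q i ≤ α (suR α q))

/-- FDR of the step-down test with critical values `α`
(rejecting the hypotheses belonging to `p_{i:m}`, `i ≤ R`). -/
def sdFDR {Ω : Type*} [MeasurableSpace Ω] (μ : Measure Ω) {m : ℕ}
    (α : ℕ → ℝ) (p : Ω → Fin m → ℝ) (I0 : Finset (Fin m)) : ℝ :=
  FDR μ p I0 (sdR α) (fun q i => 1 ≤ sdR α q ∧ q i ≤ orderStat q (sdR α q))

/-- Benjamini–Hochberg critical values `b_j = jα/m`. -/
def bh (m : ℕ) (α : ℝ) (j : ℕ) : ℝ := j * α / m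

/-- The uniform distribution on `[0,1]`. -/
def unif01 : Measure ℝ := volume.restrict (Set.Icc 0 1)

/-! ### Auxiliary lemmas -/

section Aux

lemma countLE_pair (a b t : ℝ) :
    countLE ![a,b] t = (if a ≤ t then 1 else 0) + (if b ≤ t then 1 else 0) := by
  unfold countLE
  rw [Finset.card_filter, Fin.sum_univ_two]
  simp
  rfl

lemma one_le_countLE (a b t : ℝ) : 1 ≤ countLE ![a,b] t ↔ min a b ≤ t := by
  rw [countLE_pair, min_le_iff]
  split_ifs <;> simp_all

lemma two_le_countLE (a b t : ℝ) : 2 ≤ countLE ![a,b] t ↔ max a b ≤ t := by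
  rw [countLE_pair, max_le_iff]
  split_ifs <;> simp_all

lemma orderStat_pair_one (a b : ℝ) : orderStat ![a,b] 1 = min a b := by
  unfold orderStat
  have : {t | 1 ≤ countLE ![a,b] t} = Set.Ici (min a b) := by
    ext t; simp [one_le_countLE, Set.mem_Ici]
  rw [this, csInf_Ici]

lemma orderStat_pair_two (a b : ℝ) : orderStat ![a,b] 2 = max a b := by
  unfold orderStat
  have : {t | 2 ≤ countLE ![a,b] t} = Set.Ici (max a b) := by
    ext t; simp [two_le_countLE, Set.mem_Ici]
  rw [this, csInf_Ici]

lemma bh_one (α : ℝ) : bh 2 α 1 = α / 2 := by unfold bh; norm_num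

lemma bh_two (α : ℝ) : bh 2 α 2 = α := by unfold bh; norm_num

lemma sdR_pair (α a b : ℝ) :
    sdR (bh 2 α) ![a,b]
      = if min a b ≤ α/2 then (if max a b ≤ α then 2 else 1) else 0 := by
  have hsd : sdR (bh 2 α) ![a,b] = WithBot.unbotD 0
      (((Finset.range 3).filter
        (fun j => ∀ i ∈ Finset.Icc 1 j, orderStat ![a,b] i ≤ bh 2 α i)).max) := rfl
  rw [hsd]
  have hfil : ((Finset.range 3).filter
      (fun j => ∀ i ∈ Finset.Icc 1 j, orderStat ![a,b] i ≤ bh 2 α i))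
      = if min a b ≤ α/2 then (if max a b ≤ α then {0,1,2} else {0,1}) else {0} := by
    split_ifs with h1 h2
    · ext j
      simp only [Finset.mem_filter, Finset.mem_range, Finset.mem_insert,
        Finset.mem_singleton, Finset.mem_Icc]
      constructor
      · rintro ⟨hj, _⟩; omega
      · rintro (rfl | rfl | rfl) <;>
          refine ⟨by omega, fun i hi => ?_⟩ <;>
          · obtain ⟨h1i, h2i⟩ := hi
            interval_cases i
            all_goals first
              | (rw [orderStat_pair_one, bh_one]; exact h1)
              | (rw [orderStat_pair_two, bh_two]; exact h2)
              | omega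
    · ext j
      simp only [Finset.mem_filter, Finset.mem_range, Finset.mem_insert,
        Finset.mem_singleton, Finset.mem_Icc]
      constructor
      · rintro ⟨hj, hC⟩
        by_contra hne
        have hj2 : j = 2 := by omega
        subst hj2
        have := hC 2 ⟨by omega, le_refl 2⟩
        rw [orderStat_pair_two, bh_two] at this
        exact h2 this
      · rintro (rfl | rfl)
        · exact ⟨by omega, fun i hi => by omega⟩
        · refine ⟨by omega, fun i hi => ?_⟩
          obtain ⟨h1i, h2i⟩ := hi
          interval_cases i
          rw [orderStat_pair_one, bh_one]; exact h1
    · ext j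
      simp only [Finset.mem_filter, Finset.mem_range, Finset.mem_singleton,
        Finset.mem_Icc]
      constructor
      · rintro ⟨hj, hC⟩
        by_contra hne
        have : 1 ≤ j := by omega
        have := hC 1 ⟨le_refl 1, this⟩
        rw [orderStat_pair_one, bh_one] at this
        exact h1 this
      · rintro rfl
        exact ⟨by omega, fun i hi => by omega⟩
  rw [hfil]
  split_ifs <;> decide

lemma integrand_pair (α : ℝ) (hα : α ∈ Set.Ioo (0:ℝ) 1) (a b : ℝ) :
    ((@Finset.filter (Fin 2) (fun i => 1 ≤ sdR (bh 2 α) ![a,b] ∧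
        ![a,b] i ≤ orderStat ![a,b] (sdR (bh 2 α) ![a,b]))
        (fun i => Classical.propDecidable _) ({0} : Finset (Fin 2))).card : ℝ)
      / ((max (sdR (bh 2 α) ![a,b]) 1 : ℕ) : ℝ)
    = (if min a b ≤ α/2 ∧ max a b ≤ α then (1:ℝ)/2 else 0)
      + (if a ≤ α/2 ∧ α < b then 1 else 0) := by
  obtain ⟨hα0, hα1⟩ := hα
  by_cases h1 : min a b ≤ α/2
  · by_cases h2 : max a b ≤ α
    · have hR : sdR (bh 2 α) ![a,b] = 2 := by rw [sdR_pair]; simp [h1, h2]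
      have hnb : ¬(a ≤ α/2 ∧ α < b) := by
        rintro ⟨_, hb⟩
        exact absurd (le_trans (le_max_right a b) h2) (not_le.mpr hb)
      simp only [hR, Finset.filter_singleton, orderStat_pair_two]
      rw [if_pos ⟨by omega, by simp [le_max_left]⟩, if_pos ⟨h1, h2⟩, if_neg hnb]
      norm_num
    · have hR : sdR (bh 2 α) ![a,b] = 1 := by rw [sdR_pair]; simp [h1, h2]
      simp only [hR, Finset.filter_singleton, orderStat_pair_one]
      rw [if_neg (fun h => h2 h.2 : ¬(min a b ≤ α/2 ∧ max a b ≤ α))]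
      by_cases hab : a ≤ b
      · have hbα : α < b := by
          rcases not_le.mp h2 with h
          rwa [max_eq_right hab] at h
        have haα : a ≤ α/2 := by rwa [min_eq_left hab] at h1
        rw [if_pos ⟨by omega, by simp [min_eq_left hab]⟩, if_pos ⟨haα, hbα⟩]
        norm_num
      · have hcond : ¬(1 ≤ 1 ∧ ![a,b] 0 ≤ min a b) := by
          rintro ⟨_, h⟩
          simp only [Matrix.cons_val_zero] at h
          exact hab (le_trans h (min_le_right a b))
        rw [if_neg hcond, if_neg (by rintro ⟨ha, hb⟩; exact hab (by linarith))]
        norm_num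
  · have hR : sdR (bh 2 α) ![a,b] = 0 := by rw [sdR_pair]; simp [h1]
    simp only [hR, Finset.filter_singleton]
    rw [if_neg (by rintro ⟨h, _⟩; omega),
      if_neg (fun h => h1 h.1),
      if_neg (by rintro ⟨ha, _⟩; exact h1 (le_trans (min_le_left a b) ha))]
    norm_num

lemma sdFDR_pair_eq {Ω : Type*} [MeasurableSpace Ω] (μ : Measure Ω)
    [IsProbabilityMeasure μ] (α : ℝ) (hα : α ∈ Set.Ioo (0:ℝ) 1)
    (p1 p2 : Ω → ℝ) (hm1 : Measurable p1) (hm2 : Measurable p2) :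
    sdFDR μ (bh 2 α) (fun ω => ![p1 ω, p2 ω]) {0}
      = (1/2) * (μ {ω | min (p1 ω) (p2 ω) ≤ α/2 ∧ max (p1 ω) (p2 ω) ≤ α}).toReal
        + (μ {ω | p1 ω ≤ α/2 ∧ α < p2 ω}).toReal := by
  set A : Set Ω := {ω | min (p1 ω) (p2 ω) ≤ α/2 ∧ max (p1 ω) (p2 ω) ≤ α} with hA
  set B : Set Ω := {ω | p1 ω ≤ α/2 ∧ α < p2 ω} with hB
  have hAm : MeasurableSet A := by
    apply MeasurableSet.inter
    · exact measurableSet_le (hm1.min hm2) measurable_const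
    · exact measurableSet_le (hm1.max hm2) measurable_const
  have hBm : MeasurableSet B := by
    apply MeasurableSet.inter
    · exact measurableSet_le hm1 measurable_const
    · exact measurableSet_lt measurable_const hm2
  unfold sdFDR FDR
  have hpt : ∀ ω : Ω,
      ((@Finset.filter (Fin 2) (fun i => 1 ≤ sdR (bh 2 α) ![p1 ω, p2 ω] ∧
          ![p1 ω, p2 ω] i ≤ orderStat ![p1 ω, p2 ω] (sdR (bh 2 α) ![p1 ω, p2 ω]))
          (fun i => Classical.propDecidable _) ({0} : Finset (Fin 2))).card : ℝ)
        / ((max (sdR (bh 2 α) ![p1 ω, p2 ω]) 1 : ℕ) : ℝ)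
      = A.indicator (fun _ => (1:ℝ)/2) ω + B.indicator (fun _ => (1:ℝ)) ω := by
    intro ω
    rw [integrand_pair α hα, Set.indicator_apply, Set.indicator_apply]
    rfl
  beta_reduce
  trans (∫ ω, (A.indicator (fun _ => (1:ℝ)/2) ω + B.indicator (fun _ => (1:ℝ)) ω) ∂μ)
  · refine integral_congr_ae (Filter.Eventually.of_forall fun ω => ?_)
    exact hpt ω
  rw [integral_add ((integrable_const _).indicator hAm) ((integrable_const _).indicator hBm)]
  rw [integral_indicator_const _ hAm, integral_indicator_const _ hBm]
  simp [mul_comm]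
  rfl

lemma unif01_apply (s : Set ℝ) (hs : MeasurableSet s) :
    unif01 s = volume (s ∩ Set.Icc 0 1) := Measure.restrict_apply hs

lemma unif01_Iic {t : ℝ} (h1 : t ≤ 1) : unif01 (Set.Iic t) = ENNReal.ofReal t := by
  rw [unif01_apply _ measurableSet_Iic]
  rcases le_or_gt t 0 with h0 | h0
  · have hsub : Set.Iic t ∩ Set.Icc 0 1 ⊆ Set.Icc 0 t := by
      rintro x ⟨hx, hx0, _⟩; exact ⟨hx0, hx⟩
    have hz : ENNReal.ofReal t = 0 := by simp [ENNReal.ofReal_eq_zero]; linarith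
    rw [hz]
    refine le_antisymm ((measure_mono hsub).trans_eq ?_) zero_le
    rw [Real.volume_Icc]
    simp [ENNReal.ofReal_eq_zero]; linarith
  · have : Set.Iic t ∩ Set.Icc 0 1 = Set.Icc 0 t := by
      ext x
      simp only [Set.mem_inter_iff, Set.mem_Iic, Set.mem_Icc]
      constructor
      · rintro ⟨hx, hx0, _⟩; exact ⟨hx0, hx⟩
      · rintro ⟨hx0, hx⟩; exact ⟨hx, hx0, by linarith⟩
    rw [this, Real.volume_Icc, sub_zero]

lemma unif01_Ioc {s t : ℝ} (h0 : 0 ≤ s) (h1 : t ≤ 1) :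
    unif01 (Set.Ioc s t) = ENNReal.ofReal (t - s) := by
  rw [unif01_apply _ measurableSet_Ioc]
  have : Set.Ioc s t ∩ Set.Icc 0 1 = Set.Ioc s t := by
    apply Set.inter_eq_left.mpr
    rintro x ⟨hx1, hx2⟩
    exact ⟨by linarith, by linarith⟩
  rw [this, Real.volume_Ioc]

lemma unif01_Ioi {t : ℝ} (h0 : 0 ≤ t) :
    unif01 (Set.Ioi t) = ENNReal.ofReal (1 - t) := by
  rw [unif01_apply _ measurableSet_Ioi]
  have : Set.Ioi t ∩ Set.Icc 0 1 = Set.Ioc t 1 := by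
    ext x
    simp only [Set.mem_inter_iff, Set.mem_Ioi, Set.mem_Icc, Set.mem_Ioc]
    constructor
    · rintro ⟨hx, _, hx1⟩; exact ⟨hx, hx1⟩
    · rintro ⟨hx, hx1⟩; exact ⟨hx, by linarith, hx1⟩
  rw [this, Real.volume_Ioc]

lemma prob_prod {Ω : Type*} [MeasurableSpace Ω] {μ : Measure Ω}
    {p1 U : Ω → ℝ} (hp1 : Measurable p1) (hU : Measurable U)
    (hp1unif : Measure.map p1 μ = unif01) (hUunif : Measure.map U μ = unif01)
    (hindep : IndepFun p1 U μ) (s t : Set ℝ)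
    (hs : MeasurableSet s) (ht : MeasurableSet t) :
    μ (p1 ⁻¹' s ∩ U ⁻¹' t) = unif01 s * unif01 t := by
  rw [hindep.measure_inter_preimage_eq_mul s t hs ht,
    ← Measure.map_apply hp1 hs, ← Measure.map_apply hU ht, hp1unif, hUunif]

lemma prob_marginal {Ω : Type*} [MeasurableSpace Ω] {μ : Measure Ω}
    {p1 : Ω → ℝ} (hp1 : Measurable p1)
    (hp1unif : Measure.map p1 μ = unif01) (s : Set ℝ) (hs : MeasurableSet s) :
    μ (p1 ⁻¹' s) = unif01 s := by
  rw [← Measure.map_apply hp1 hs, hp1unif]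

end Aux

/-- The FDR of the BH step-down test is not monotone in the
false-null p-value: with `m = 2`, `I₀ = {1}`, `p₁, U` i.i.d. uniform on `[0,1]`
and `p₂ ∈ {0, αU, U, (1-α)U+α}`, the FDR values are
`α/2, 3α/8, α/2 - α²/8, α/2` respectively, so
`FDR(αU) < FDR(U) < FDR((1-α)U+α)` while `FDR(0) > FDR(αU)`. -/
theorem sd_fdr_not_monotone
    {Ω : Type*} [MeasurableSpace Ω] (μ : Measure Ω) [IsProbabilityMeasure μ]
    (α : ℝ) (hα : α ∈ Set.Ioo (0:ℝ) 1)
    (p1 U : Ω → ℝ) (hp1 : Measurable p1) (hU : Measurable U)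
    (hp1unif : Measure.map p1 μ = unif01) (hUunif : Measure.map U μ = unif01)
    (hindep : IndepFun p1 U μ) :
    sdFDR μ (bh 2 α) (fun ω => ![p1 ω, α * U ω]) {0} = 3 * α / 8 ∧
    sdFDR μ (bh 2 α) (fun ω => ![p1 ω, U ω]) {0} = α / 2 - α ^ 2 / 8 ∧
    sdFDR μ (bh 2 α) (fun ω => ![p1 ω, 0]) {0} = α / 2 ∧
    sdFDR μ (bh 2 α) (fun ω => ![p1 ω, (1 - α) * U ω + α]) {0} = α / 2 ∧
    sdFDR μ (bh 2 α) (fun ω => ![p1 ω, α * U ω]) {0}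
      < sdFDR μ (bh 2 α) (fun ω => ![p1 ω, U ω]) {0} ∧
    sdFDR μ (bh 2 α) (fun ω => ![p1 ω, U ω]) {0}
      < sdFDR μ (bh 2 α) (fun ω => ![p1 ω, (1 - α) * U ω + α]) {0} ∧
    sdFDR μ (bh 2 α) (fun ω => ![p1 ω, α * U ω]) {0}
      < sdFDR μ (bh 2 α) (fun ω => ![p1 ω, 0]) {0} := by
  obtain ⟨hα0, hα1⟩ := hα
  have h1a : (0:ℝ) < 1 - α := by linarith
  have c1 : sdFDR μ (bh 2 α) (fun ω => ![p1 ω, α * U ω]) {0} = 3 * α / 8 := by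
    rw [sdFDR_pair_eq μ α ⟨hα0, hα1⟩ p1 (fun ω => α * U ω) hp1 (measurable_const.mul hU)]
    have hA : {ω | min (p1 ω) (α * U ω) ≤ α/2 ∧ max (p1 ω) (α * U ω) ≤ α}
        = (p1 ⁻¹' Set.Iic (α/2) ∩ U ⁻¹' Set.Iic 1)
          ∪ (p1 ⁻¹' Set.Ioc (α/2) α ∩ U ⁻¹' Set.Iic (1/2)) := by
      ext ω
      simp only [Set.mem_setOf_eq, Set.mem_union, Set.mem_inter_iff, Set.mem_preimage,
        Set.mem_Iic, Set.mem_Ioc, min_le_iff, max_le_iff]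
      constructor
      · rintro ⟨hmin, ha, hb⟩
        by_cases h : p1 ω ≤ α/2
        · exact Or.inl ⟨h, by nlinarith⟩
        · rcases hmin with h' | h'
          · exact absurd h' h
          · exact Or.inr ⟨⟨not_le.mp h, ha⟩, by nlinarith⟩
      · rintro (⟨h1, h2⟩ | ⟨⟨h1, h2⟩, h3⟩)
        · exact ⟨Or.inl h1, by linarith, by nlinarith⟩
        · exact ⟨Or.inr (by nlinarith), h2, by nlinarith⟩
    have hB : {ω | p1 ω ≤ α/2 ∧ α < α * U ω}
        = p1 ⁻¹' Set.Iic (α/2) ∩ U ⁻¹' Set.Ioi 1 := by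
      ext ω
      simp only [Set.mem_setOf_eq, Set.mem_inter_iff, Set.mem_preimage, Set.mem_Iic,
        Set.mem_Ioi]
      constructor
      · rintro ⟨h1, h2⟩; exact ⟨h1, by nlinarith⟩
      · rintro ⟨h1, h2⟩; exact ⟨h1, by nlinarith⟩
    have hdisj : Disjoint (p1 ⁻¹' Set.Iic (α/2) ∩ U ⁻¹' Set.Iic 1)
        (p1 ⁻¹' Set.Ioc (α/2) α ∩ U ⁻¹' Set.Iic (1/2)) := by
      refine Set.disjoint_left.mpr ?_
      rintro ω ⟨h1, _⟩ ⟨h2, _⟩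
      simp only [Set.mem_preimage, Set.mem_Iic, Set.mem_Ioc] at h1 h2
      linarith [h2.1]
    rw [hA, hB,
      measure_union hdisj ((hp1 measurableSet_Ioc).inter (hU measurableSet_Iic)),
      prob_prod hp1 hU hp1unif hUunif hindep _ _ measurableSet_Iic measurableSet_Iic,
      prob_prod hp1 hU hp1unif hUunif hindep _ _ measurableSet_Ioc measurableSet_Iic,
      prob_prod hp1 hU hp1unif hUunif hindep _ _ measurableSet_Iic measurableSet_Ioi,
      unif01_Iic (by linarith : α/2 ≤ (1:ℝ)), unif01_Iic le_rfl,
      unif01_Ioc (by linarith : (0:ℝ) ≤ α/2) hα1.le,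
      unif01_Iic (by norm_num : (1:ℝ)/2 ≤ 1), unif01_Ioi (by norm_num : (0:ℝ) ≤ 1),
      ← ENNReal.ofReal_mul (by linarith), ← ENNReal.ofReal_mul (by linarith),
      ← ENNReal.ofReal_add (by nlinarith) (by nlinarith),
      ← ENNReal.ofReal_mul (by linarith),
      ENNReal.toReal_ofReal (by nlinarith), ENNReal.toReal_ofReal (by nlinarith)]
    ring
  have c2 : sdFDR μ (bh 2 α) (fun ω => ![p1 ω, U ω]) {0} = α / 2 - α ^ 2 / 8 := by
    rw [sdFDR_pair_eq μ α ⟨hα0, hα1⟩ p1 U hp1 hU]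
    have hA : {ω | min (p1 ω) (U ω) ≤ α/2 ∧ max (p1 ω) (U ω) ≤ α}
        = (p1 ⁻¹' Set.Iic (α/2) ∩ U ⁻¹' Set.Iic α)
          ∪ (p1 ⁻¹' Set.Ioc (α/2) α ∩ U ⁻¹' Set.Iic (α/2)) := by
      ext ω
      simp only [Set.mem_setOf_eq, Set.mem_union, Set.mem_inter_iff, Set.mem_preimage,
        Set.mem_Iic, Set.mem_Ioc, min_le_iff, max_le_iff]
      constructor
      · rintro ⟨hmin, ha, hb⟩
        by_cases h : p1 ω ≤ α/2
        · exact Or.inl ⟨h, hb⟩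
        · rcases hmin with h' | h'
          · exact absurd h' h
          · exact Or.inr ⟨⟨not_le.mp h, ha⟩, h'⟩
      · rintro (⟨h1, h2⟩ | ⟨⟨h1, h2⟩, h3⟩)
        · exact ⟨Or.inl h1, by linarith, h2⟩
        · exact ⟨Or.inr h3, h2, by linarith⟩
    have hB : {ω | p1 ω ≤ α/2 ∧ α < U ω}
        = p1 ⁻¹' Set.Iic (α/2) ∩ U ⁻¹' Set.Ioi α := by
      ext ω
      simp only [Set.mem_setOf_eq, Set.mem_inter_iff, Set.mem_preimage, Set.mem_Iic,
        Set.mem_Ioi]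
    have hdisj : Disjoint (p1 ⁻¹' Set.Iic (α/2) ∩ U ⁻¹' Set.Iic α)
        (p1 ⁻¹' Set.Ioc (α/2) α ∩ U ⁻¹' Set.Iic (α/2)) := by
      refine Set.disjoint_left.mpr ?_
      rintro ω ⟨h1, _⟩ ⟨h2, _⟩
      simp only [Set.mem_preimage, Set.mem_Iic, Set.mem_Ioc] at h1 h2
      linarith [h2.1]
    rw [hA, hB,
      measure_union hdisj ((hp1 measurableSet_Ioc).inter (hU measurableSet_Iic)),
      prob_prod hp1 hU hp1unif hUunif hindep _ _ measurableSet_Iic measurableSet_Iic,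
      prob_prod hp1 hU hp1unif hUunif hindep _ _ measurableSet_Ioc measurableSet_Iic,
      prob_prod hp1 hU hp1unif hUunif hindep _ _ measurableSet_Iic measurableSet_Ioi,
      unif01_Iic (by linarith : α/2 ≤ (1:ℝ)), unif01_Iic hα1.le,
      unif01_Ioc (by linarith : (0:ℝ) ≤ α/2) hα1.le, unif01_Ioi hα0.le,
      ← ENNReal.ofReal_mul (by linarith), ← ENNReal.ofReal_mul (by linarith),
      ← ENNReal.ofReal_add (by nlinarith) (by nlinarith),
      ← ENNReal.ofReal_mul (by linarith),
      ENNReal.toReal_ofReal (by nlinarith), ENNReal.toReal_ofReal (by nlinarith)]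
    ring
  have c3 : sdFDR μ (bh 2 α) (fun ω => ![p1 ω, 0]) {0} = α / 2 := by
    rw [sdFDR_pair_eq μ α ⟨hα0, hα1⟩ p1 (fun _ => 0) hp1 measurable_const]
    have hA : {ω | min (p1 ω) (0:ℝ) ≤ α/2 ∧ max (p1 ω) (0:ℝ) ≤ α}
        = p1 ⁻¹' Set.Iic α := by
      ext ω
      simp only [Set.mem_setOf_eq, Set.mem_preimage, Set.mem_Iic, min_le_iff, max_le_iff]
      constructor
      · rintro ⟨_, h, _⟩; exact h
      · intro h; exact ⟨Or.inr (by linarith), h, by linarith⟩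
    have hB : {ω | p1 ω ≤ α/2 ∧ α < (0:ℝ)} = (∅ : Set Ω) := by
      ext ω
      simp only [Set.mem_setOf_eq, Set.mem_empty_iff_false, iff_false, not_and]
      intro _
      linarith
    rw [hA, hB, prob_marginal hp1 hp1unif _ measurableSet_Iic, unif01_Iic hα1.le,
      measure_empty, ENNReal.toReal_ofReal hα0.le]
    simp
    ring
  have c4 : sdFDR μ (bh 2 α) (fun ω => ![p1 ω, (1 - α) * U ω + α]) {0} = α / 2 := by
    rw [sdFDR_pair_eq μ α ⟨hα0, hα1⟩ p1 (fun ω => (1 - α) * U ω + α) hp1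
      ((measurable_const.mul hU).add_const α)]
    have hμA : μ {ω | min (p1 ω) ((1 - α) * U ω + α) ≤ α/2 ∧
        max (p1 ω) ((1 - α) * U ω + α) ≤ α} = 0 := by
      have hsub : {ω | min (p1 ω) ((1 - α) * U ω + α) ≤ α/2 ∧
          max (p1 ω) ((1 - α) * U ω + α) ≤ α} ⊆ U ⁻¹' Set.Iic 0 := by
        rintro ω ⟨_, hmax⟩
        simp only [Set.mem_preimage, Set.mem_Iic]
        have h2 := (max_le_iff.mp hmax).2
        nlinarith
      refine le_antisymm ((measure_mono hsub).trans_eq ?_) zero_le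
      rw [prob_marginal hU hUunif _ measurableSet_Iic, unif01_Iic (by linarith)]
      simp
    have hB : {ω | p1 ω ≤ α/2 ∧ α < (1 - α) * U ω + α}
        = p1 ⁻¹' Set.Iic (α/2) ∩ U ⁻¹' Set.Ioi 0 := by
      ext ω
      simp only [Set.mem_setOf_eq, Set.mem_inter_iff, Set.mem_preimage, Set.mem_Iic,
        Set.mem_Ioi]
      constructor
      · rintro ⟨hh1, hh2⟩; exact ⟨hh1, by nlinarith⟩
      · rintro ⟨hh1, hh2⟩; exact ⟨hh1, by nlinarith⟩
    rw [hμA, hB,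
      prob_prod hp1 hU hp1unif hUunif hindep _ _ measurableSet_Iic measurableSet_Ioi,
      unif01_Iic (by linarith : α/2 ≤ (1:ℝ)), unif01_Ioi le_rfl,
      ← ENNReal.ofReal_mul (by linarith), ENNReal.toReal_ofReal (by nlinarith)]
    simp
  refine ⟨c1, c2, c3, c4, ?_, ?_, ?_⟩
  · rw [c1, c2]; nlinarith
  · rw [c2, c4]; nlinarith [sq_nonneg α, mul_pos hα0 hα0]
  · rw [c1, c3]; nlinarith
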